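/- Let G = Z ≀_{X_m} (Z ≀_{X_n} Z) be the iterated permutational wreath product where the outer Z acts on a set X_m of size m by cyclic shift and the middle Z acts on X_n of size n by cyclic shift. Then the center of G is isomorphic to mZ × nZ × Z ≅ Z³. -/

import Mathlib

def permAut {X : Type*} (B : Type*) [Group B] (e : Equiv.Perm X) : MulAut (X → B) :=
  MulEquiv.arrowCongr e (MulEquiv.refl B)

def wreathMul {A X : Type*} [Group A] (ρ : A →* Equiv.Perm X) (B : Type*) [Group B] :
    A →* MulAut (X → B) where
  toFun a := permAut B (ρ a)
  map_one' := by
    ext f x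
    simp [permAut]
    rfl
  map_mul' := by
    intro a b
    ext f x
    simp [permAut, MulEquiv.arrowCongr, map_mul]
    rfl

noncomputable def mingen (G : Type*) [Group G] : ℕ :=
  sInf {k | ∃ S : Finset G, S.card = k ∧ Subgroup.closure (S : Set G) = ⊤}

/-- The (unfaithful, for `n ≥ 1`) cyclic-shift action of `ℤ` on `ℤ/n`. -/
def shiftRep (n : ℕ) : Multiplicative ℤ →* Equiv.Perm (ZMod n) where
  toFun a := Equiv.addLeft ((a.toAdd : ℤ) : ZMod n)
  map_one' := by ext x; simp
  map_mul' := by intro a b; ext x; simp [add_assoc]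

/-- The inner wreath product `ℤ ≀_{X_n} ℤ`. -/
def innerW (n : ℕ) : Type :=
  (ZMod n → Multiplicative ℤ) ⋊[wreathMul (shiftRep n) (Multiplicative ℤ)] Multiplicative ℤ

instance (n : ℕ) : Group (innerW n) :=
  inferInstanceAs (Group ((ZMod n → Multiplicative ℤ)
    ⋊[wreathMul (shiftRep n) (Multiplicative ℤ)] Multiplicative ℤ))

namespace Scratch

open Multiplicative

abbrev W (k : ℕ) (B : Type*) [Group B] :=
  (ZMod k → B) ⋊[wreathMul (shiftRep k) B] Multiplicative ℤ

variable {B : Type*} [Group B]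

lemma act_apply (k : ℕ) (a : Multiplicative ℤ) (f : ZMod k → B) (x : ZMod k) :
    (wreathMul (shiftRep k) B a f) x = f (x - ((a.toAdd : ℤ) : ZMod k)) := by
  simp [wreathMul, permAut, shiftRep, MulEquiv.arrowCongr, sub_eq_neg_add]

lemma mem_center_iff (k : ℕ) (hB : ∃ v : B, v ≠ 1) (g : W k B) :
    g ∈ Subgroup.center (W k B) ↔
      (∀ x, g.left x = g.left 0) ∧ g.left 0 ∈ Subgroup.center B ∧
        ((g.right.toAdd : ZMod k) = 0) := by
  rw [Subgroup.mem_center_iff]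
  constructor
  · intro H
    have hconst : ∀ x, g.left x = g.left 0 := by
      intro x
      obtain ⟨j, hj⟩ := ZMod.intCast_surjective (n := k) x
      have h1 := congrArg SemidirectProduct.left (H ⟨1, ofAdd j⟩)
      simp only [SemidirectProduct.mul_left, map_one, mul_one, one_mul] at h1
      have h2 := congrFun h1 x
      rw [act_apply] at h2
      simpa [hj] using h2.symm
    refine ⟨hconst, ?_, ?_⟩
    · rw [Subgroup.mem_center_iff]
      intro v
      have h1 := congrArg SemidirectProduct.left (H ⟨fun _ => v, 1⟩)
      simp only [SemidirectProduct.mul_left, map_one, MulAut.one_apply] at h1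
      have h2 := congrFun h1 0
      rw [Pi.mul_apply, Pi.mul_apply, act_apply] at h2
      exact h2
    · by_contra h0
      obtain ⟨v, hv⟩ := hB
      have h1 := congrArg SemidirectProduct.left (H ⟨Pi.mulSingle 0 v, 1⟩)
      simp only [SemidirectProduct.mul_left, map_one, MulAut.one_apply] at h1
      have h2 := congrFun h1 0
      rw [Pi.mul_apply, Pi.mul_apply, act_apply, Pi.mulSingle_eq_same,
        Pi.mulSingle_eq_of_ne (by simpa [sub_eq_zero] using fun h => h0 h), mul_one] at h2
      exact hv (mul_eq_right.mp h2)
  · rintro ⟨hconst, hcent, hA⟩ ⟨h, c⟩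
    refine SemidirectProduct.ext ?_ (mul_comm _ _)
    funext x
    show (h * wreathMul (shiftRep k) B c g.left) x = (g.left * wreathMul (shiftRep k) B g.right h) x
    rw [Pi.mul_apply, Pi.mul_apply, act_apply, act_apply, hA, sub_zero,
      hconst (x - _), hconst x]
    exact Subgroup.mem_center_iff.mp hcent (h x)

end Scratch

namespace Scratch
open Multiplicative AddSubgroup

def mkW (k : ℕ) {B : Type*} [Group B] (f : ZMod k → B) (a : Multiplicative ℤ) : W k B := ⟨f, a⟩

def innerC (n : ℕ) (b c : ℤ) : W n (Multiplicative ℤ) := mkW n (fun _ => ofAdd c) (ofAdd b)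

lemma innerC_mul (n : ℕ) (b c b' c' : ℤ) :
    innerC n b c * innerC n b' c' = innerC n (b + b') (c + c') := by
  refine SemidirectProduct.ext ?_ ?_
  · rw [SemidirectProduct.mul_left]
    funext y
    rw [Pi.mul_apply, act_apply]
    exact (ofAdd_add c c').symm
  · rw [SemidirectProduct.mul_right]
    exact (ofAdd_add b b').symm

def outerC (m n : ℕ) (a b c : ℤ) : W m (W n (Multiplicative ℤ)) :=
  mkW m (fun _ => innerC n b c) (ofAdd a)

lemma outerC_mul (m n : ℕ) (a b c a' b' c' : ℤ) :
    outerC m n a b c * outerC m n a' b' c' = outerC m n (a + a') (b + b') (c + c') := by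
  refine SemidirectProduct.ext ?_ ?_
  · rw [SemidirectProduct.mul_left]
    funext x
    rw [Pi.mul_apply, act_apply]
    exact (innerC_mul n b c b' c').symm ▸ rfl
  · rw [SemidirectProduct.mul_right]
    exact (ofAdd_add a a').symm

def Ψ (m n : ℕ) :
    Multiplicative (↥(zmultiples (m : ℤ)) × ↥(zmultiples (n : ℤ)) × ℤ) →*
      W m (W n (Multiplicative ℤ)) where
  toFun p := outerC m n (p.toAdd.1 : ℤ) (p.toAdd.2.1 : ℤ) p.toAdd.2.2
  map_one' := rfl
  map_mul' := by
    intro p q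
    show outerC m n _ _ _ = outerC m n _ _ _ * outerC m n _ _ _
    rw [outerC_mul]
    simp

lemma Ψ_inj (m n : ℕ) : Function.Injective (Ψ m n) := by
  intro p q h
  have hr := congrArg SemidirectProduct.right h
  have hl := congrFun (congrArg SemidirectProduct.left h) 0
  have hlr := congrArg SemidirectProduct.right hl
  have hll := congrFun (congrArg SemidirectProduct.left hl) 0
  have e1 : (p.toAdd.1 : ℤ) = (q.toAdd.1 : ℤ) := by
    simpa [Ψ, outerC, innerC, mkW] using hr
  have e2 : (p.toAdd.2.1 : ℤ) = (q.toAdd.2.1 : ℤ) := by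
    simpa [Ψ, outerC, innerC, mkW] using hlr
  have e3 : p.toAdd.2.2 = q.toAdd.2.2 := by
    simpa [Ψ, outerC, innerC, mkW] using hll
  have : p.toAdd = q.toAdd :=
    Prod.ext (Subtype.ext e1) (Prod.ext (Subtype.ext e2) e3)
  exact this

lemma range_eq (m n : ℕ) (hm : 0 < m) (hn : 0 < n) :
    (Ψ m n).range = Subgroup.center (W m (W n (Multiplicative ℤ))) := by
  ext g
  rw [mem_center_iff m ⟨innerC n 1 0, by
      intro h
      have := congrArg SemidirectProduct.right h
      simp [innerC, mkW] at this⟩ g]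
  constructor
  · rintro ⟨p, rfl⟩
    obtain ⟨i, hi⟩ := AddSubgroup.mem_zmultiples_iff.mp p.toAdd.1.2
    obtain ⟨j, hj⟩ := AddSubgroup.mem_zmultiples_iff.mp p.toAdd.2.1.2
    refine ⟨fun x => rfl, ?_, ?_⟩
    · rw [mem_center_iff n ⟨ofAdd 1, fun h => one_ne_zero (α := ℤ)
        (by simpa using congrArg toAdd h)⟩]
      refine ⟨fun y => rfl, Subgroup.mem_center_iff.mpr fun v => mul_comm _ _, ?_⟩
      show (((p.toAdd.2.1 : ℤ) : ℤ) : ZMod n) = 0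
      rw [ZMod.intCast_zmod_eq_zero_iff_dvd]
      exact ⟨j, by rw [← hj]; simp [mul_comm]⟩
    · show (((p.toAdd.1 : ℤ) : ℤ) : ZMod m) = 0
      rw [ZMod.intCast_zmod_eq_zero_iff_dvd]
      exact ⟨i, by rw [← hi]; simp [mul_comm]⟩
  · rintro ⟨hconst, hcent, hA⟩
    rw [mem_center_iff n ⟨ofAdd 1, fun h => one_ne_zero (α := ℤ)
        (by simpa using congrArg toAdd h)⟩] at hcent
    obtain ⟨hconst', -, hA'⟩ := hcent
    rw [ZMod.intCast_zmod_eq_zero_iff_dvd] at hA hA'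
    obtain ⟨k1, hk1⟩ := hA
    obtain ⟨k2, hk2⟩ := hA'
    refine ⟨ofAdd (⟨g.right.toAdd, AddSubgroup.mem_zmultiples_iff.mpr
        ⟨k1, by rw [smul_eq_mul, hk1]; ring⟩⟩,
      ⟨(g.left 0).right.toAdd, AddSubgroup.mem_zmultiples_iff.mpr
        ⟨k2, by rw [smul_eq_mul, hk2]; ring⟩⟩,
      ((g.left 0).left 0).toAdd), ?_⟩
    refine SemidirectProduct.ext ?_ rfl
    funext x
    rw [hconst x]
    refine SemidirectProduct.ext ?_ rfl
    funext y
    rw [hconst' y]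
    rfl

end Scratch


/-- for the iterated wreath product `G = ℤ ≀_{X_m} (ℤ ≀_{X_n} ℤ)` with
cyclic-shift actions on `X_m` and `X_n` of sizes `m`, `n`, the center of `G` is
isomorphic to `mℤ × nℤ × ℤ ≅ ℤ³`. -/
theorem center_iterated_shift_wreath_int (m n : ℕ) (hm : 0 < m) (hn : 0 < n) :
    Nonempty (Subgroup.center ((ZMod m → innerW n)
        ⋊[wreathMul (shiftRep m) (innerW n)] Multiplicative ℤ) ≃*
      Multiplicative (↥(AddSubgroup.zmultiples (m : ℤ)) ×
        ↥(AddSubgroup.zmultiples (n : ℤ)) × ℤ)) := by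
  exact ⟨(MulEquiv.subgroupCongr (Scratch.range_eq m n hm hn).symm).trans
    (MonoidHom.ofInjective (Scratch.Ψ_inj m n)).symm⟩
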